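/- Let Γ = G *_A t be the HNN-extension of G where the stable letter t acts as the identity on the subgroup A ≤ G. Then for any subgroup G' of G, the subgroup ⟨G', t⟩ of Γ is the HNN-extension G' *_{G' ∩ A} t; in particular ⟨G', t⟩ ∩ G = G'. -/

import Mathlib

namespace Stmt11

open HNNExtension HNNExtension.NormalWord

section Aux

variable {G : Type*} [Group G] (A : Subgroup G) (G' : Subgroup G)

local notation "A'" => A.comap G'.subtype

/-- The lifted homomorphism. -/
noncomputable def e' : HNNExtension ↥G' (A.comap G'.subtype) (A.comap G'.subtype)
      (MulEquiv.refl ↥(A.comap G'.subtype)) →* HNNExtension G A A (MulEquiv.refl ↥A) :=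
  HNNExtension.lift ((of : G →* _).comp G'.subtype) t (by
    intro a
    have := t_mul_of (φ := (MulEquiv.refl ↥A)) ⟨(a : ↥G') , a.2⟩
    exact this)

lemma e'_of (g : ↥G') : e' A G' (of g) = of (g : G) := by
  exact lift_of _ _ _ g

lemma e'_t : e' A G' t = t := by
  exact lift_t _ _ _

/-- Map a reduced word over `G'` to a reduced word over `G`. -/
def mapWord (w : ReducedWord ↥G' (A.comap G'.subtype) (A.comap G'.subtype)) :
    ReducedWord G A A where
  head := (w.head : G)
  toList := w.toList.map (fun p => (p.1, (p.2 : G)))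
  chain := by
    have := w.chain
    rw [List.isChain_map]
    refine this.imp ?_
    rintro ⟨u, g⟩ ⟨u', g'⟩ h hm
    refine h ?_
    rcases Int.units_eq_one_or u with rfl | rfl
    · exact hm
    · exact hm

lemma prod_mapWord (w : ReducedWord ↥G' (A.comap G'.subtype) (A.comap G'.subtype)) :
    (mapWord A G' w).prod (MulEquiv.refl ↥A) =
      e' A G' (w.prod (MulEquiv.refl ↥(A.comap G'.subtype))) := by
  simp only [ReducedWord.prod, mapWord, map_mul, e'_of]
  congr 1
  rw [MonoidHom.map_list_prod]
  simp only [List.map_map]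
  refine congrArg List.prod (List.map_congr_left ?_)
  intro p _
  simp only [Function.comp_apply]
  rw [map_mul, map_zpow, e'_of, e'_t]

lemma exists_reducedWord (x : HNNExtension ↥G' (A.comap G'.subtype) (A.comap G'.subtype)
      (MulEquiv.refl ↥(A.comap G'.subtype))) :
    ∃ w : ReducedWord ↥G' (A.comap G'.subtype) (A.comap G'.subtype),
      w.prod (MulEquiv.refl ↥(A.comap G'.subtype)) = x := by
  rcases (TransversalPair.nonempty ↥G' (A.comap G'.subtype) (A.comap G'.subtype)) with ⟨d⟩
  exact ⟨(equiv (MulEquiv.refl ↥(A.comap G'.subtype)) d x).toReducedWord,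
    (equiv (MulEquiv.refl ↥(A.comap G'.subtype)) d).symm_apply_apply x⟩

lemma e'_injective : Function.Injective (e' A G') := by
  rw [injective_iff_map_eq_one]
  intro x hx
  obtain ⟨w, rfl⟩ := exists_reducedWord A G' x
  rw [← prod_mapWord] at hx
  have hnil : (mapWord A G' w).toList = [] := by
    refine ReducedWord.toList_eq_nil_of_mem_of_range (MulEquiv.refl ↥A) _ ?_
    rw [hx]; exact one_mem _
  have hnil' : w.toList = [] := by
    simpa [mapWord] using hnil
  have : (mapWord A G' w).prod (MulEquiv.refl ↥A) = of (w.head : G) := by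
    simp [ReducedWord.prod, mapWord, hnil']
  rw [this] at hx
  have : (w.head : G) = 1 := of_injective (φ := MulEquiv.refl ↥A) (by simpa using hx)
  have hh : w.head = 1 := Subtype.ext this
  simp [ReducedWord.prod, hh, hnil', -Subgroup.comap_subtype]

end Aux

theorem subgroups_in_trivial_HNN_extension
    {G : Type*} [Group G] (A : Subgroup G) (G' : Subgroup G) :
    ∀ Γ' : Subgroup (HNNExtension G A A (MulEquiv.refl ↥A)),
      Γ' = (G'.map (of : G →* HNNExtension G A A (MulEquiv.refl ↥A))) ⊔
           Subgroup.closure {(t : HNNExtension G A A (MulEquiv.refl ↥A))} →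
      (∃ e : HNNExtension ↥G' (A.comap G'.subtype) (A.comap G'.subtype)
            (MulEquiv.refl ↥(A.comap G'.subtype)) →*
          HNNExtension G A A (MulEquiv.refl ↥A),
        Function.Injective e ∧ e.range = Γ' ∧
        (∀ g : ↥G', e (of g) = of (g : G)) ∧ e t = t) ∧
      Γ'.comap (of : G →* HNNExtension G A A (MulEquiv.refl ↥A)) = G' := by
  intro Γ' hΓ'
  have hrange : (e' A G').range = Γ' := by
    subst hΓ'
    apply le_antisymm
    · rintro _ ⟨x, rfl⟩
      induction x using HNNExtension.induction_on with
      | of g =>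
        rw [e'_of]
        exact Subgroup.mem_sup_left ⟨g, g.2, rfl⟩
      | t =>
        rw [e'_t]
        exact Subgroup.mem_sup_right (Subgroup.subset_closure rfl)
      | mul x y hx hy => rw [map_mul]; exact mul_mem hx hy
      | inv x hx => rw [map_inv]; exact inv_mem hx
    · rw [sup_le_iff]
      constructor
      · rintro _ ⟨g, hg, rfl⟩
        exact ⟨of ⟨g, hg⟩, e'_of A G' ⟨g, hg⟩⟩
      · rw [Subgroup.closure_le]
        rintro _ rfl
        exact ⟨t, e'_t A G'⟩
  refine ⟨⟨e' A G', e'_injective A G', hrange, e'_of A G', e'_t A G'⟩, ?_⟩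
  ext g
  simp only [Subgroup.mem_comap]
  constructor
  · intro hg
    rw [← hrange] at hg
    obtain ⟨x, hx⟩ := hg
    obtain ⟨w, rfl⟩ := exists_reducedWord A G' x
    rw [← prod_mapWord] at hx
    have hnil : (mapWord A G' w).toList = [] :=
      ReducedWord.toList_eq_nil_of_mem_of_range (MulEquiv.refl ↥A) _ ⟨g, hx.symm⟩
    have hnil' : w.toList = [] := by simpa [mapWord] using hnil
    have hprod : (mapWord A G' w).prod (MulEquiv.refl ↥A) = of (w.head : G) := by
      simp [ReducedWord.prod, mapWord, hnil']
    rw [hprod] at hx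
    have : (w.head : G) = g := of_injective (φ := MulEquiv.refl ↥A) hx
    rw [← this]; exact w.head.2
  · intro hg
    rw [← hrange]
    exact ⟨of ⟨g, hg⟩, e'_of A G' ⟨g, hg⟩⟩

end Stmt11
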